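/- Let 0 < λ < 1/2 and let K_λ be the attractor of the iterated function system {f_1(x) = λx, f_2(x) = λx + 1 - λ}, i.e. the unique nonempty compact set K_λ ⊂ ℝ with K_λ = λK_λ ∪ (λK_λ + 1 - λ). Let f : ℝ² → ℝ be continuously differentiable. If for every (x,y) ∈ [0,1]² the partial derivative ∂f/∂y is nonzero and ((1-2λ)/λ) · |∂f/∂y| ≤ |∂f/∂x| ≤ (1/(1-2λ)) · |∂f/∂y|, then f(K_λ, K_λ) = {f(x,y) : x, y ∈ K_λ} equals the closed interval [min of f on K_λ × K_λ, max of f on K_λ × K_λ]. -/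

import Mathlib

open Set

/-- MVT along a segment: if the directional derivative of `f` in direction `q - p`
is nonnegative on a convex set containing `p` and `q`, then `f p ≤ f q`. -/
lemma nns_mvt_seg (f : ℝ × ℝ → ℝ) (hf : ContDiff ℝ 1 f) {S : Set (ℝ × ℝ)}
    (hS : Convex ℝ S) {p q : ℝ × ℝ} (hp : p ∈ S) (hq : q ∈ S)
    (hd : ∀ ξ ∈ S, 0 ≤ fderiv ℝ f ξ (q - p)) : f p ≤ f q := by
  set v := q - p with hv
  have hdiff : Differentiable ℝ f := hf.differentiable one_ne_zero
  have hmem : ∀ t : ℝ, t ∈ Icc (0:ℝ) 1 → p + t • v ∈ S := by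
    intro t ht
    have h1 : (1 - t) • p + t • q = p + t • v := by
      rw [hv]; rw [smul_sub, sub_smul, one_smul]; abel
    rw [← h1]
    exact hS hp hq (by linarith [ht.1, ht.2]) ht.1 (by ring)
  have hline : ∀ t : ℝ, HasDerivAt (fun t : ℝ => f (p + t • v))
      (fderiv ℝ f (p + t • v) v) t := by
    intro t
    have h1 : HasDerivAt (fun t : ℝ => p + t • v) v t := by
      simpa using ((hasDerivAt_id t).smul_const v).const_add p
    exact ((hdiff (p + t • v)).hasFDerivAt.comp_hasDerivAt t h1)
  have hcont : ContinuousOn (fun t : ℝ => f (p + t • v)) (Icc 0 1) :=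
    (hf.continuous.comp (by continuity)).continuousOn
  obtain ⟨t, ht, heq⟩ := exists_hasDerivAt_eq_slope (fun t : ℝ => f (p + t • v))
    (fun t => fderiv ℝ f (p + t • v) v) one_pos hcont (fun t _ => hline t)
  have h0 : (0:ℝ) ≤ fderiv ℝ f (p + t • v) v := hd _ (hmem t (Ioo_subset_Icc_self ht))
  have h1 : f (p + (1:ℝ) • v) = f q := by rw [hv]; simp
  have h2 : f (p + (0:ℝ) • v) = f p := by simp
  rw [heq] at h0
  simp only [h1, h2, sub_zero, div_one] at h0
  linarith

/-- Constant sign of a continuous nonvanishing function on a convex set. -/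
lemma nns_sign_const (g : ℝ × ℝ → ℝ) (hg : Continuous g) {S : Set (ℝ × ℝ)}
    (hS : Convex ℝ S) (h0 : ∀ x ∈ S, g x ≠ 0) {p q : ℝ × ℝ}
    (hp : p ∈ S) (hq : q ∈ S) (hgp : 0 < g p) : 0 < g q := by
  rcases (h0 q hq).lt_or_gt with h | h
  · exfalso
    have hcont : ContinuousOn (fun t : ℝ => g ((1 - t) • p + t • q)) (Icc 0 1) :=
      (hg.comp (by continuity)).continuousOn
    have : (0:ℝ) ∈ Icc (g ((1-(1:ℝ)) • p + (1:ℝ) • q)) (g ((1-(0:ℝ)) • p + (0:ℝ) • q)) := by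
      simp; constructor <;> linarith
    obtain ⟨t, ht, heq⟩ := intermediate_value_Icc' (zero_le_one) hcont this
    exact h0 _ (hS hp hq (by linarith [ht.1, ht.2]) ht.1 (by ring)) heq
  · exact h

/-- The key step: if the value `c` is surrounded by values of `f` on the union of the four
children squares' fractal pieces, then it is surrounded on one single child. -/
lemma nns_step (f : ℝ × ℝ → ℝ) (hf : ContDiff ℝ 1 f) (lam δ a b c s : ℝ)
    (hlam0 : 0 < lam) (hlam1 : lam < 1/2) (hδ : 0 < δ) (hs : s = 1 ∨ s = -1)
    (hfy : ∀ ξ ∈ Icc a (a+δ) ×ˢ Icc b (b+δ), 0 < fderiv ℝ f ξ (0,1))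
    (hfx : ∀ ξ ∈ Icc a (a+δ) ×ˢ Icc b (b+δ),
       (1 - 2*lam)/lam * fderiv ℝ f ξ (0,1) ≤ s * fderiv ℝ f ξ (1,0) ∧
       s * fderiv ℝ f ξ (1,0) ≤ 1/(1-2*lam) * fderiv ℝ f ξ (0,1))
    (T00 T01 T10 T11 : Set (ℝ × ℝ))
    (X : ℝ → ℝ) (hX : ∀ u, X u = a + (1 - s)/2 * δ + s * u)
    (hBL00 : (X 0, b) ∈ T00) (hTR00 : (X (lam*δ), b + lam*δ) ∈ T00)
    (hBL01 : (X 0, b + (1-lam)*δ) ∈ T01) (hTR01 : (X (lam*δ), b + δ) ∈ T01)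
    (hBL10 : (X ((1-lam)*δ), b) ∈ T10) (hTR10 : (X δ, b + lam*δ) ∈ T10)
    (hBL11 : (X ((1-lam)*δ), b + (1-lam)*δ) ∈ T11) (hTR11 : (X δ, b + δ) ∈ T11)
    (hExLow : ∃ p, (p ∈ T00 ∨ p ∈ T01 ∨ p ∈ T10 ∨ p ∈ T11) ∧ f p ≤ c)
    (hExHigh : ∃ q, (q ∈ T00 ∨ q ∈ T01 ∨ q ∈ T10 ∨ q ∈ T11) ∧ c ≤ f q) :
    ∃ T, (T = T00 ∨ T = T01 ∨ T = T10 ∨ T = T11) ∧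
      (∃ p ∈ T, f p ≤ c) ∧ (∃ q ∈ T, c ≤ f q) := by
  set Q : Set (ℝ × ℝ) := Icc a (a+δ) ×ˢ Icc b (b+δ) with hQdef
  have hQc : Convex ℝ Q := (convex_Icc _ _).prod (convex_Icc _ _)
  have hXmem : ∀ u, 0 ≤ u → u ≤ δ → X u ∈ Icc a (a+δ) := by
    intro u h1 h2
    rcases hs with h | h <;> rw [hX, h] <;> constructor <;> [linarith; linarith; linarith; linarith]
  have hlin : ∀ (ξ : ℝ × ℝ) (x y : ℝ),
      fderiv ℝ f ξ (x, y) = x * fderiv ℝ f ξ (1,0) + y * fderiv ℝ f ξ (0,1) := by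
    intro ξ x y
    have h : (x, y) = x • ((1:ℝ),(0:ℝ)) + y • ((0:ℝ),(1:ℝ)) := by simp
    rw [h, map_add, map_smul, map_smul]; simp [smul_eq_mul]
  -- generic comparison via MVT
  have key : ∀ u₁ w₁ u₂ w₂ : ℝ, 0 ≤ u₁ → u₁ ≤ δ → 0 ≤ u₂ → u₂ ≤ δ →
      0 ≤ w₁ → w₁ ≤ δ → 0 ≤ w₂ → w₂ ≤ δ →
      (∀ ξ ∈ Q, 0 ≤ (u₂ - u₁) * (s * fderiv ℝ f ξ (1,0)) + (w₂ - w₁) * fderiv ℝ f ξ (0,1)) →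
      f (X u₁, b + w₁) ≤ f (X u₂, b + w₂) := by
    intro u₁ w₁ u₂ w₂ hu₁ hu₁' hu₂ hu₂' hw₁ hw₁' hw₂ hw₂' hdir
    have hp : (X u₁, b + w₁) ∈ Q := ⟨hXmem u₁ hu₁ hu₁', by constructor <;> simp <;> linarith⟩
    have hq : (X u₂, b + w₂) ∈ Q := ⟨hXmem u₂ hu₂ hu₂', by constructor <;> simp <;> linarith⟩
    refine nns_mvt_seg f hf hQc hp hq ?_
    intro ξ hξ
    have hv : ((X u₂, b + w₂) : ℝ × ℝ) - (X u₁, b + w₁) = (s * (u₂ - u₁), w₂ - w₁) := by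
      rw [Prod.mk_sub_mk, hX, hX, Prod.mk.injEq]; constructor <;> ring
    rw [hv, hlin]
    have := hdir ξ hξ
    nlinarith [this]
  have hlam2 : 0 < 1 - 2*lam := by linarith
  -- monotone comparison
  have mono : ∀ u₁ w₁ u₂ w₂ : ℝ, 0 ≤ u₁ → u₁ ≤ u₂ → u₂ ≤ δ →
      0 ≤ w₁ → w₁ ≤ w₂ → w₂ ≤ δ →
      f (X u₁, b + w₁) ≤ f (X u₂, b + w₂) := by
    intro u₁ w₁ u₂ w₂ h1 h2 h3 h4 h5 h6
    refine key u₁ w₁ u₂ w₂ h1 (by linarith) (by linarith) h3 h4 (by linarith) (by linarith) h6 ?_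
    intro ξ hξ
    have hy := hfy ξ hξ
    have hx := (hfx ξ hξ).1
    have hpos : 0 < (1 - 2*lam)/lam * fderiv ℝ f ξ (0,1) := by positivity
    have hsfx : 0 < s * fderiv ℝ f ξ (1,0) := lt_of_lt_of_le hpos hx
    nlinarith [mul_nonneg (sub_nonneg.2 h2) hsfx.le, mul_nonneg (sub_nonneg.2 h5) hy.le]
  -- lower-bound comparison (diagonal step right-down by (λδ, -(1-2λ)δ))
  have cmpA : ∀ u w u' w' : ℝ, 0 ≤ u → u + lam*δ ≤ δ → (1-2*lam)*δ ≤ w → w ≤ δ →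
      u' = u + lam*δ → w' = w - (1-2*lam)*δ →
      f (X u, b + w) ≤ f (X u', b + w') := by
    intro u w u' w' h1 h2 h3 h4 hu' hw'
    subst hu'; subst hw'
    refine key _ _ _ _ h1 (by nlinarith) (by nlinarith) h2 (by nlinarith) h4 (by nlinarith) (by nlinarith) ?_
    intro ξ hξ
    have hy := hfy ξ hξ
    have hx := (hfx ξ hξ).1
    have h5 : lam * δ * ((1 - 2*lam)/lam * fderiv ℝ f ξ (0,1)) ≤ lam * δ * (s * fderiv ℝ f ξ (1,0)) := by
      apply mul_le_mul_of_nonneg_left hx (by positivity)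
    have h6 : lam * δ * ((1 - 2*lam)/lam * fderiv ℝ f ξ (0,1)) = (1-2*lam)*δ * fderiv ℝ f ξ (0,1) := by
      field_simp
    nlinarith [h5, h6]
  -- upper-bound comparison (step left-up by (-(1-2λ)δ, δ))
  have cmpB : f (X ((1-lam)*δ), b + 0) ≤ f (X (lam*δ), b + δ) := by
    refine key _ _ _ _ (by nlinarith) (by nlinarith) (by nlinarith) (by nlinarith)
      le_rfl hδ.le hδ.le le_rfl ?_
    intro ξ hξ
    have hy := hfy ξ hξ
    have hx := (hfx ξ hξ).2
    have h5 : (1-2*lam)*δ*(s * fderiv ℝ f ξ (1,0)) ≤ (1-2*lam)*δ*(1/(1-2*lam) * fderiv ℝ f ξ (0,1)) :=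
      mul_le_mul_of_nonneg_left hx (by positivity)
    have h6 : (1-2*lam)*δ*(1/(1-2*lam) * fderiv ℝ f ξ (0,1)) = δ * fderiv ℝ f ξ (0,1) := by
      field_simp
    nlinarith [h5, h6]
  -- classification
  by_contra hcon
  have cls : ∀ T, (T = T00 ∨ T = T01 ∨ T = T10 ∨ T = T11) →
      (∀ p ∈ T, c < f p) ∨ (∀ p ∈ T, f p < c) := by
    intro T hT
    by_cases hA : ∃ p ∈ T, f p ≤ c
    · right
      intro q hq
      by_contra h
      exact hcon ⟨T, hT, hA, q, hq, not_lt.mp h⟩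
    · left
      intro p hp
      by_contra h
      exact hA ⟨p, hp, not_lt.mp h⟩
  -- a TR corner with f < c
  obtain ⟨p, hpT, hpc⟩ := hExLow
  obtain ⟨q, hqT, hqc⟩ := hExHigh
  have hlow : ∃ u w : ℝ, lam*δ ≤ u ∧ u ≤ δ ∧ lam*δ ≤ w ∧ w ≤ δ ∧ f (X u, b + w) < c := by
    have hll : ∀ T, (T = T00 ∨ T = T01 ∨ T = T10 ∨ T = T11) → p ∈ T →
        (∀ r ∈ T, f r < c) := by
      intro T hT hpmem
      rcases cls T hT with h | h
      · exact absurd hpc (not_le.mpr (h p hpmem))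
      · exact h
    have hld : 0 < lam * δ := by positivity
    have h1d : lam * δ ≤ δ := by nlinarith
    rcases hpT with h | h | h | h
    · exact ⟨lam*δ, lam*δ, le_rfl, h1d, le_rfl, h1d, hll T00 (Or.inl rfl) h _ hTR00⟩
    · exact ⟨lam*δ, δ, le_rfl, h1d, h1d, le_rfl, hll T01 (Or.inr (Or.inl rfl)) h _ hTR01⟩
    · exact ⟨δ, lam*δ, h1d, le_rfl, le_rfl, h1d, hll T10 (Or.inr (Or.inr (Or.inl rfl))) h _ hTR10⟩
    · exact ⟨δ, δ, h1d, le_rfl, h1d, le_rfl, hll T11 (Or.inr (Or.inr (Or.inr rfl))) h _ hTR11⟩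
  have hhigh : ∃ u w : ℝ, 0 ≤ u ∧ u ≤ (1-lam)*δ ∧ 0 ≤ w ∧ w ≤ (1-lam)*δ ∧ c < f (X u, b + w) := by
    have hhh : ∀ T, (T = T00 ∨ T = T01 ∨ T = T10 ∨ T = T11) → q ∈ T →
        (∀ r ∈ T, c < f r) := by
      intro T hT hqmem
      rcases cls T hT with h | h
      · exact h
      · exact absurd hqc (not_le.mpr (h q hqmem))
    have h1d : (0:ℝ) ≤ (1-lam)*δ := by nlinarith
    rcases hqT with h | h | h | h
    · exact ⟨0, 0, le_rfl, h1d, le_rfl, h1d, by simpa using hhh T00 (Or.inl rfl) h _ hBL00⟩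
    · exact ⟨0, (1-lam)*δ, le_rfl, h1d, h1d, le_rfl, hhh T01 (Or.inr (Or.inl rfl)) h _ hBL01⟩
    · exact ⟨(1-lam)*δ, 0, h1d, le_rfl, le_rfl, h1d, by
        simpa using hhh T10 (Or.inr (Or.inr (Or.inl rfl))) h _ hBL10⟩
    · exact ⟨(1-lam)*δ, (1-lam)*δ, h1d, le_rfl, h1d, le_rfl, hhh T11 (Or.inr (Or.inr (Or.inr rfl))) h _ hBL11⟩
  obtain ⟨u₀, w₀, hu₀1, hu₀2, hw₀1, hw₀2, hlt⟩ := hlow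
  obtain ⟨u₁, w₁, hu₁1, hu₁2, hw₁1, hw₁2, hgt⟩ := hhigh
  have h1mld : (1-lam)*δ ≤ δ := by nlinarith
  have hld0 : (0:ℝ) ≤ lam * δ := by positivity
  have hsum : (1-lam)*δ + lam*δ = δ := by ring
  have h2ld : (1-2*lam)*δ ≤ (1-lam)*δ := by nlinarith
  have h2ld0 : (0:ℝ) ≤ (1-2*lam)*δ := by nlinarith
  -- T00 is low
  have low00 : ∀ r ∈ T00, f r < c := by
    rcases cls T00 (Or.inl rfl) with h | h
    · exfalso
      have h1 : f (X 0, b + 0) ≤ f (X u₀, b + w₀) :=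
        mono 0 0 u₀ w₀ le_rfl (by linarith) hu₀2 le_rfl (by linarith) hw₀2
      have h2 := h _ hBL00
      simp only [add_zero] at h1
      linarith
    · exact h
  -- T11 is high
  have high11 : ∀ r ∈ T11, c < f r := by
    rcases cls T11 (Or.inr (Or.inr (Or.inr rfl))) with h | h
    · exact h
    · exfalso
      have h1 : f (X u₁, b + w₁) ≤ f (X δ, b + δ) :=
        mono u₁ w₁ δ δ hu₁1 (by linarith) le_rfl hw₁1 (by linarith) le_rfl
      have h2 := h _ hTR11
      linarith
  -- T01 is low
  have low01 : ∀ r ∈ T01, f r < c := by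
    rcases cls T01 (Or.inr (Or.inl rfl)) with h | h
    · exfalso
      have h1 : f (X 0, b + (1-lam)*δ) ≤ f (X (lam*δ), b + lam*δ) := by
        refine cmpA 0 ((1-lam)*δ) (lam*δ) (lam*δ) le_rfl (by linarith) (by linarith) h1mld
          (by ring) (by ring)
      have h2 := h _ hBL01
      have h3 := low00 _ hTR00
      linarith
    · exact h
  -- T10 is low
  have low10 : ∀ r ∈ T10, f r < c := by
    rcases cls T10 (Or.inr (Or.inr (Or.inl rfl))) with h | h
    · exfalso
      have h1 := cmpB
      have h2 := h _ hBL10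
      have h3 := low01 _ hTR01
      simp only [add_zero] at h1
      linarith
    · exact h
  -- contradiction with T11 high via cmpA
  have h1 : f (X ((1-lam)*δ), b + (1-lam)*δ) ≤ f (X δ, b + lam*δ) := by
    refine cmpA ((1-lam)*δ) ((1-lam)*δ) δ (lam*δ) (by linarith) (by linarith) (by linarith)
      h1mld (by ring) (by ring)
  have h2 := high11 _ hBL11
  have h3 := low10 _ hTR10
  linarith

/-- Basic facts about the attractor: `0 ∈ K`, `1 ∈ K`, `K ⊆ [0,1]`. -/
lemma nns_K_facts (lam : ℝ) (hlam₀ : 0 < lam) (hlam₁ : lam < 1/2)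
    (K : Set ℝ) (hKne : K.Nonempty) (hKc : IsCompact K)
    (hKattr : K = (fun x => lam * x) '' K ∪ (fun x => lam * x + 1 - lam) '' K) :
    (0:ℝ) ∈ K ∧ (1:ℝ) ∈ K ∧ K ⊆ Icc 0 1 := by
  have hbddA : BddAbove K := hKc.bddAbove
  have hbddB : BddBelow K := hKc.bddBelow
  set M := sSup K with hM
  set m := sInf K with hm
  have hMK : M ∈ K := hKc.sSup_mem hKne
  have hmK : m ∈ K := hKc.sInf_mem hKne
  have hMub : ∀ x ∈ K, x ≤ M := fun x hx => le_csSup hbddA hx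
  have hmlb : ∀ x ∈ K, m ≤ x := fun x hx => csInf_le hbddB hx
  -- M = 1
  have hM1 : M = 1 := by
    have hup : M ≤ lam * M + 1 - lam := by
      apply csSup_le hKne
      intro x hx
      rw [hKattr] at hx
      rcases hx with ⟨k, hk, rfl⟩ | ⟨k, hk, rfl⟩
      · have := hMub k hk
        dsimp only
        nlinarith
      · have := hMub k hk
        dsimp only
        nlinarith
    have hmem : lam * M + 1 - lam ∈ K := by
      rw [hKattr]; exact Or.inr ⟨M, hMK, rfl⟩
    have hdn : lam * M + 1 - lam ≤ M := hMub _ hmem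
    nlinarith
  have hm0 : m = 0 := by
    have hlo : lam * m ≤ m := by
      apply le_csInf hKne
      intro x hx
      rw [hKattr] at hx
      rcases hx with ⟨k, hk, rfl⟩ | ⟨k, hk, rfl⟩
      · have := hmlb k hk; dsimp only; nlinarith
      · have := hmlb k hk; dsimp only; nlinarith
    have hmem : lam * m ∈ K := by
      rw [hKattr]; exact Or.inl ⟨m, hmK, rfl⟩
    have hup : m ≤ lam * m := hmlb _ hmem
    nlinarith
  refine ⟨by rwa [hm0] at hmK, by rwa [hM1] at hMK, fun x hx => ⟨?_, ?_⟩⟩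
  · rw [← hm0]; exact hmlb x hx
  · rw [← hM1]; exact hMub x hx

/-- The level-`n` piece of `K` starting at `a`. -/
def nnsPiece (K : Set ℝ) (lam a : ℝ) (n : ℕ) : Set ℝ := (fun t => a + lam^n * t) '' K

lemma nnsPiece_mem (K : Set ℝ) (lam a : ℝ) (n : ℕ) {t : ℝ} (ht : t ∈ K) :
    a + lam^n * t ∈ nnsPiece K lam a n := ⟨t, ht, rfl⟩

lemma nnsPiece_subset_Icc {K : Set ℝ} {lam : ℝ} (hlam : 0 < lam) (hK : K ⊆ Icc 0 1)
    (a : ℝ) (n : ℕ) : nnsPiece K lam a n ⊆ Icc a (a + lam^n) := by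
  rintro _ ⟨t, ht, rfl⟩
  have h1 := (hK ht).1
  have h2 := (hK ht).2
  have hp : (0:ℝ) < lam^n := pow_pos hlam n
  dsimp only
  constructor <;> nlinarith

lemma nnsPiece_zero (K : Set ℝ) (lam : ℝ) : nnsPiece K lam 0 0 = K := by
  simp [nnsPiece]

lemma nnsPiece_split (K : Set ℝ) (lam : ℝ)
    (hKattr : K = (fun x => lam * x) '' K ∪ (fun x => lam * x + 1 - lam) '' K)
    (a : ℝ) (n : ℕ) :
    nnsPiece K lam a n =
      nnsPiece K lam a (n+1) ∪ nnsPiece K lam (a + (1-lam) * lam^n) (n+1) := by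
  conv_lhs => rw [nnsPiece, hKattr]
  rw [image_union, image_image, image_image]
  unfold nnsPiece
  congr 1
  · apply image_congr
    intro t _
    ring
  · apply image_congr
    intro t _
    ring

lemma nnsPiece_mem' {K : Set ℝ} {lam a : ℝ} {n : ℕ} {t x : ℝ} (ht : t ∈ K)
    (hx : x = a + lam^n * t) : x ∈ nnsPiece K lam a n := ⟨t, ht, hx.symm ▸ rfl⟩

lemma nns_reach (lam : ℝ) (hlam₀ : 0 < lam) (hlam₁ : lam < 1/2)
    (K : Set ℝ) (h0K : (0:ℝ) ∈ K) (h1K : (1:ℝ) ∈ K) (hK01 : K ⊆ Icc 0 1)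
    (hKc : IsCompact K)
    (hKattr : K = (fun x => lam * x) '' K ∪ (fun x => lam * x + 1 - lam) '' K)
    (f : ℝ × ℝ → ℝ) (hf : ContDiff ℝ 1 f) (c s : ℝ) (hs : s = 1 ∨ s = -1)
    (hfy : ∀ ξ ∈ Icc (0:ℝ) 1 ×ˢ Icc (0:ℝ) 1, 0 < fderiv ℝ f ξ (0,1))
    (hsfx : ∀ ξ ∈ Icc (0:ℝ) 1 ×ˢ Icc (0:ℝ) 1,
        (1-2*lam)/lam * fderiv ℝ f ξ (0,1) ≤ s * fderiv ℝ f ξ (1,0) ∧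
        s * fderiv ℝ f ξ (1,0) ≤ 1/(1-2*lam) * fderiv ℝ f ξ (0,1))
    (hpl : ∃ p ∈ K ×ˢ K, f p ≤ c) (hqh : ∃ q ∈ K ×ˢ K, c ≤ f q) :
    c ∈ f '' (K ×ˢ K) := by
  have key : ∀ n : ℕ, ∃ a b : ℝ, 0 ≤ a ∧ a + lam^n ≤ 1 ∧ 0 ≤ b ∧ b + lam^n ≤ 1 ∧
      nnsPiece K lam a n ⊆ K ∧ nnsPiece K lam b n ⊆ K ∧
      (∃ p ∈ nnsPiece K lam a n ×ˢ nnsPiece K lam b n, f p ≤ c) ∧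
      (∃ q ∈ nnsPiece K lam a n ×ˢ nnsPiece K lam b n, c ≤ f q) := by
    intro n
    induction n with
    | zero =>
      have hz := nnsPiece_zero K lam
      refine ⟨0, 0, le_rfl, by norm_num, le_rfl, by norm_num, ?_, ?_, ?_, ?_⟩ <;>
        rw [hz]
      · exact hpl
      · exact hqh
    | succ n ih =>
      obtain ⟨a, b, ha0, ha1, hb0, hb1, hKa, hKb, ⟨p, hpm, hpc⟩, ⟨q, hqm, hqc⟩⟩ := ih
      set δ := lam ^ n with hδdef
      have hδ : 0 < δ := pow_pos hlam₀ n
      have hsub : Icc a (a+δ) ×ˢ Icc b (b+δ) ⊆ Icc (0:ℝ) 1 ×ˢ Icc (0:ℝ) 1 :=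
        prod_mono (Icc_subset_Icc ha0 ha1) (Icc_subset_Icc hb0 hb1)
      have hfy' : ∀ ξ ∈ Icc a (a+δ) ×ˢ Icc b (b+δ), 0 < fderiv ℝ f ξ (0,1) :=
        fun ξ hξ => hfy ξ (hsub hξ)
      have hfx' : ∀ ξ ∈ Icc a (a+δ) ×ˢ Icc b (b+δ),
          (1-2*lam)/lam * fderiv ℝ f ξ (0,1) ≤ s * fderiv ℝ f ξ (1,0) ∧
          s * fderiv ℝ f ξ (1,0) ≤ 1/(1-2*lam) * fderiv ℝ f ξ (0,1) :=
        fun ξ hξ => hsfx ξ (hsub hξ)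
      -- next-level data for one coordinate
      have hnext : ∀ α α' : ℝ, 0 ≤ α → α + lam^n ≤ 1 → nnsPiece K lam α n ⊆ K →
          (α' = α ∨ α' = α + (1-lam)*lam^n) →
          0 ≤ α' ∧ α' + lam^(n+1) ≤ 1 ∧ nnsPiece K lam α' (n+1) ⊆ K := by
        intro α α' h0 h1 hsubK hor
        have hsplit := nnsPiece_split K lam hKattr α n
        have hstep : lam^(n+1) ≤ lam^n := by
          have := pow_pos hlam₀ n
          rw [pow_succ]; nlinarith
        rcases hor with rfl | rfl
        · exact ⟨h0, by linarith,
            (hsplit ▸ subset_union_left).trans hsubK⟩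
        · have hpos : (0:ℝ) < lam^n := pow_pos hlam₀ n
          refine ⟨by nlinarith, ?_, (hsplit ▸ subset_union_right).trans hsubK⟩
          have : α + (1-lam)*lam^n + lam^(n+1) = α + lam^n := by ring
          linarith [this.le]
      have hsplita := nnsPiece_split K lam hKattr a n
      have hsplitb := nnsPiece_split K lam hKattr b n
      rw [hsplita, hsplitb] at hpm hqm
      rcases hs with rfl | rfl
      · -- s = 1 : column 0 is the left piece
        set A := nnsPiece K lam a (n+1)
        set A' := nnsPiece K lam (a + (1-lam)*lam^n) (n+1)
        set B := nnsPiece K lam b (n+1)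
        set B' := nnsPiece K lam (b + (1-lam)*lam^n) (n+1)
        have hres := nns_step f hf lam δ a b c 1 hlam₀ hlam₁ hδ (Or.inl rfl) hfy' hfx'
          (A ×ˢ B) (A ×ˢ B') (A' ×ˢ B) (A' ×ˢ B') (fun u => a + u)
          (fun u => by norm_num)
          ⟨nnsPiece_mem' h0K (by push_cast [pow_succ]; ring),
           nnsPiece_mem' h0K (by push_cast [pow_succ]; ring)⟩
          ⟨nnsPiece_mem' h1K (by push_cast [pow_succ]; ring),
           nnsPiece_mem' h1K (by push_cast [pow_succ]; ring)⟩
          ⟨nnsPiece_mem' h0K (by push_cast [pow_succ]; ring),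
           nnsPiece_mem' h0K (by push_cast [pow_succ]; ring)⟩
          ⟨nnsPiece_mem' h1K (by push_cast [pow_succ]; ring),
           nnsPiece_mem' h1K (by push_cast [pow_succ]; ring)⟩
          ⟨nnsPiece_mem' h0K (by push_cast [pow_succ]; ring),
           nnsPiece_mem' h0K (by push_cast [pow_succ]; ring)⟩
          ⟨nnsPiece_mem' h1K (by push_cast [pow_succ]; ring),
           nnsPiece_mem' h1K (by push_cast [pow_succ]; ring)⟩
          ⟨nnsPiece_mem' h0K (by push_cast [pow_succ]; ring),
           nnsPiece_mem' h0K (by push_cast [pow_succ]; ring)⟩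
          ⟨nnsPiece_mem' h1K (by push_cast [pow_succ]; ring),
           nnsPiece_mem' h1K (by push_cast [pow_succ]; ring)⟩
          ⟨p, by
            rcases hpm.1 with h | h <;> rcases hpm.2 with h' | h'
            · exact Or.inl ⟨h, h'⟩
            · exact Or.inr (Or.inl ⟨h, h'⟩)
            · exact Or.inr (Or.inr (Or.inl ⟨h, h'⟩))
            · exact Or.inr (Or.inr (Or.inr ⟨h, h'⟩)), hpc⟩
          ⟨q, by
            rcases hqm.1 with h | h <;> rcases hqm.2 with h' | h'
            · exact Or.inl ⟨h, h'⟩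
            · exact Or.inr (Or.inl ⟨h, h'⟩)
            · exact Or.inr (Or.inr (Or.inl ⟨h, h'⟩))
            · exact Or.inr (Or.inr (Or.inr ⟨h, h'⟩)), hqc⟩
        obtain ⟨T, hT, hL, hH⟩ := hres
        rcases hT with rfl | rfl | rfl | rfl
        · obtain ⟨x1, x2, x3⟩ := hnext a a ha0 ha1 hKa (Or.inl rfl)
          obtain ⟨y1, y2, y3⟩ := hnext b b hb0 hb1 hKb (Or.inl rfl)
          exact ⟨a, b, x1, x2, y1, y2, x3, y3, hL, hH⟩
        · obtain ⟨x1, x2, x3⟩ := hnext a a ha0 ha1 hKa (Or.inl rfl)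
          obtain ⟨y1, y2, y3⟩ := hnext b _ hb0 hb1 hKb (Or.inr rfl)
          exact ⟨a, _, x1, x2, y1, y2, x3, y3, hL, hH⟩
        · obtain ⟨x1, x2, x3⟩ := hnext a _ ha0 ha1 hKa (Or.inr rfl)
          obtain ⟨y1, y2, y3⟩ := hnext b b hb0 hb1 hKb (Or.inl rfl)
          exact ⟨_, b, x1, x2, y1, y2, x3, y3, hL, hH⟩
        · obtain ⟨x1, x2, x3⟩ := hnext a _ ha0 ha1 hKa (Or.inr rfl)
          obtain ⟨y1, y2, y3⟩ := hnext b _ hb0 hb1 hKb (Or.inr rfl)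
          exact ⟨_, _, x1, x2, y1, y2, x3, y3, hL, hH⟩
      · -- s = -1 : column 0 is the right piece
        set A := nnsPiece K lam a (n+1)
        set A' := nnsPiece K lam (a + (1-lam)*lam^n) (n+1)
        set B := nnsPiece K lam b (n+1)
        set B' := nnsPiece K lam (b + (1-lam)*lam^n) (n+1)
        have hres := nns_step f hf lam δ a b c (-1) hlam₀ hlam₁ hδ (Or.inr rfl) hfy' hfx'
          (A' ×ˢ B) (A' ×ˢ B') (A ×ˢ B) (A ×ˢ B') (fun u => a + δ - u)
          (fun u => by norm_num; ring)
          ⟨nnsPiece_mem' h1K (by push_cast [pow_succ]; ring),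
           nnsPiece_mem' h0K (by push_cast [pow_succ]; ring)⟩
          ⟨nnsPiece_mem' h0K (by push_cast [pow_succ]; ring),
           nnsPiece_mem' h1K (by push_cast [pow_succ]; ring)⟩
          ⟨nnsPiece_mem' h1K (by push_cast [pow_succ]; ring),
           nnsPiece_mem' h0K (by push_cast [pow_succ]; ring)⟩
          ⟨nnsPiece_mem' h0K (by push_cast [pow_succ]; ring),
           nnsPiece_mem' h1K (by push_cast [pow_succ]; ring)⟩
          ⟨nnsPiece_mem' h1K (by push_cast [pow_succ]; ring),
           nnsPiece_mem' h0K (by push_cast [pow_succ]; ring)⟩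
          ⟨nnsPiece_mem' h0K (by push_cast [pow_succ]; ring),
           nnsPiece_mem' h1K (by push_cast [pow_succ]; ring)⟩
          ⟨nnsPiece_mem' h1K (by push_cast [pow_succ]; ring),
           nnsPiece_mem' h0K (by push_cast [pow_succ]; ring)⟩
          ⟨nnsPiece_mem' h0K (by push_cast [pow_succ]; ring),
           nnsPiece_mem' h1K (by push_cast [pow_succ]; ring)⟩
          ⟨p, by
            rcases hpm.1 with h | h <;> rcases hpm.2 with h' | h'
            · exact Or.inr (Or.inr (Or.inl ⟨h, h'⟩))
            · exact Or.inr (Or.inr (Or.inr ⟨h, h'⟩))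
            · exact Or.inl ⟨h, h'⟩
            · exact Or.inr (Or.inl ⟨h, h'⟩), hpc⟩
          ⟨q, by
            rcases hqm.1 with h | h <;> rcases hqm.2 with h' | h'
            · exact Or.inr (Or.inr (Or.inl ⟨h, h'⟩))
            · exact Or.inr (Or.inr (Or.inr ⟨h, h'⟩))
            · exact Or.inl ⟨h, h'⟩
            · exact Or.inr (Or.inl ⟨h, h'⟩), hqc⟩
        obtain ⟨T, hT, hL, hH⟩ := hres
        rcases hT with rfl | rfl | rfl | rfl
        · obtain ⟨x1, x2, x3⟩ := hnext a _ ha0 ha1 hKa (Or.inr rfl)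
          obtain ⟨y1, y2, y3⟩ := hnext b b hb0 hb1 hKb (Or.inl rfl)
          exact ⟨_, b, x1, x2, y1, y2, x3, y3, hL, hH⟩
        · obtain ⟨x1, x2, x3⟩ := hnext a _ ha0 ha1 hKa (Or.inr rfl)
          obtain ⟨y1, y2, y3⟩ := hnext b _ hb0 hb1 hKb (Or.inr rfl)
          exact ⟨_, _, x1, x2, y1, y2, x3, y3, hL, hH⟩
        · obtain ⟨x1, x2, x3⟩ := hnext a a ha0 ha1 hKa (Or.inl rfl)
          obtain ⟨y1, y2, y3⟩ := hnext b b hb0 hb1 hKb (Or.inl rfl)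
          exact ⟨a, b, x1, x2, y1, y2, x3, y3, hL, hH⟩
        · obtain ⟨x1, x2, x3⟩ := hnext a a ha0 ha1 hKa (Or.inl rfl)
          obtain ⟨y1, y2, y3⟩ := hnext b _ hb0 hb1 hKb (Or.inr rfl)
          exact ⟨a, _, x1, x2, y1, y2, x3, y3, hL, hH⟩
  -- closure argument
  have himg : IsCompact (f '' (K ×ˢ K)) := (hKc.prod hKc).image hf.continuous
  rw [← himg.isClosed.closure_eq]
  rw [Metric.mem_closure_iff]
  intro ε hε
  have hucont : UniformContinuousOn f (Icc (0:ℝ) 1 ×ˢ Icc (0:ℝ) 1) :=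
    (isCompact_Icc.prod isCompact_Icc).uniformContinuousOn_of_continuous
      hf.continuous.continuousOn
  rw [Metric.uniformContinuousOn_iff] at hucont
  obtain ⟨d, hd, hcd⟩ := hucont ε hε
  obtain ⟨n, hn⟩ := exists_pow_lt_of_lt_one hd (by linarith : lam < 1)
  obtain ⟨a, b, ha0, ha1, hb0, hb1, hKa, hKb, ⟨p, hpm, hpc⟩, ⟨q, hqm, hqc⟩⟩ := key n
  have hIa := nnsPiece_subset_Icc hlam₀ hK01 a n
  have hIb := nnsPiece_subset_Icc hlam₀ hK01 b n
  have hsub : Icc a (a+lam^n) ×ˢ Icc b (b+lam^n) ⊆ Icc (0:ℝ) 1 ×ˢ Icc (0:ℝ) 1 :=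
    prod_mono (Icc_subset_Icc ha0 ha1) (Icc_subset_Icc hb0 hb1)
  have hpQ : p ∈ Icc a (a+lam^n) ×ˢ Icc b (b+lam^n) := ⟨hIa hpm.1, hIb hpm.2⟩
  have hqQ : q ∈ Icc a (a+lam^n) ×ˢ Icc b (b+lam^n) := ⟨hIa hqm.1, hIb hqm.2⟩
  have hdist : dist p q < d := by
    have h1 : dist p.1 q.1 ≤ lam^n := by
      have := Real.dist_le_of_mem_Icc hpQ.1 hqQ.1
      linarith
    have h2 : dist p.2 q.2 ≤ lam^n := by
      have := Real.dist_le_of_mem_Icc hpQ.2 hqQ.2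
      linarith
    rw [Prod.dist_eq]
    exact lt_of_le_of_lt (max_le h1 h2) hn
  have hfpq : dist (f p) (f q) < ε := hcd p (hsub hpQ) q (hsub hqQ) hdist
  refine ⟨f p, ⟨p, ⟨hKa hpm.1, hKb hpm.2⟩, rfl⟩, ?_⟩
  rw [Real.dist_eq] at hfpq ⊢
  rw [abs_of_nonneg (by linarith : (0:ℝ) ≤ c - f p)]
  have := neg_abs_le (f p - f q)
  linarith

/-- Assuming `∂_y f > 0` on the unit square, every value between two attained values
is attained on `K × K`. -/
lemma nns_main2 (lam : ℝ) (hlam₀ : 0 < lam) (hlam₁ : lam < 1/2)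
    (K : Set ℝ) (h0K : (0:ℝ) ∈ K) (h1K : (1:ℝ) ∈ K) (hK01 : K ⊆ Icc 0 1)
    (hKc : IsCompact K)
    (hKattr : K = (fun x => lam * x) '' K ∪ (fun x => lam * x + 1 - lam) '' K)
    (f : ℝ × ℝ → ℝ) (hf : ContDiff ℝ 1 f) (c : ℝ)
    (hfy : ∀ ξ ∈ Icc (0:ℝ) 1 ×ˢ Icc (0:ℝ) 1, 0 < fderiv ℝ f ξ (0,1))
    (hder : ∀ ξ ∈ Icc (0:ℝ) 1 ×ˢ Icc (0:ℝ) 1,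
      (1 - 2 * lam) / lam * |fderiv ℝ f ξ (0, 1)| ≤ |fderiv ℝ f ξ (1, 0)| ∧
      |fderiv ℝ f ξ (1, 0)| ≤ 1 / (1 - 2 * lam) * |fderiv ℝ f ξ (0, 1)|)
    (hpl : ∃ p ∈ K ×ˢ K, f p ≤ c) (hqh : ∃ q ∈ K ×ˢ K, c ≤ f q) :
    c ∈ f '' (K ×ˢ K) := by
  have hQc : Convex ℝ (Icc (0:ℝ) 1 ×ˢ Icc (0:ℝ) 1) := (convex_Icc _ _).prod (convex_Icc _ _)
  have hfxcont : Continuous (fun ξ => fderiv ℝ f ξ (1, 0)) :=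
    (hf.continuous_fderiv one_ne_zero).clm_apply continuous_const
  have hz₀ : ((0:ℝ), (0:ℝ)) ∈ Icc (0:ℝ) 1 ×ˢ Icc (0:ℝ) 1 := by
    constructor <;> exact ⟨le_rfl, zero_le_one⟩
  have hfxne : ∀ ξ ∈ Icc (0:ℝ) 1 ×ˢ Icc (0:ℝ) 1, fderiv ℝ f ξ (1, 0) ≠ 0 := by
    intro ξ hξ
    have h1 := (hder ξ hξ).1
    have h2 := hfy ξ hξ
    have h3 : (0:ℝ) < (1 - 2*lam)/lam := by
      apply div_pos <;> linarith
    intro h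
    rw [h, abs_zero] at h1
    rw [abs_of_pos h2] at h1
    nlinarith
  rcases (hfxne _ hz₀).lt_or_gt with hneg | hpos
  · -- fx < 0 everywhere : s = -1
    have hfxneg : ∀ ξ ∈ Icc (0:ℝ) 1 ×ˢ Icc (0:ℝ) 1, 0 < -fderiv ℝ f ξ (1,0) := by
      intro ξ hξ
      exact nns_sign_const (fun ξ => -fderiv ℝ f ξ (1,0)) hfxcont.neg hQc
        (fun x hx => neg_ne_zero.mpr (hfxne x hx)) hz₀ hξ (by linarith)
    refine nns_reach lam hlam₀ hlam₁ K h0K h1K hK01 hKc hKattr f hf c (-1)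
      (Or.inr rfl) hfy ?_ hpl hqh
    intro ξ hξ
    have h := hder ξ hξ
    have hy := hfy ξ hξ
    have hx := hfxneg ξ hξ
    rw [abs_of_pos hy, abs_of_neg (by linarith : fderiv ℝ f ξ (1,0) < 0)] at h
    constructor <;> [linarith [h.1]; linarith [h.2]]
  · -- fx > 0 everywhere : s = 1
    have hfxpos : ∀ ξ ∈ Icc (0:ℝ) 1 ×ˢ Icc (0:ℝ) 1, 0 < fderiv ℝ f ξ (1,0) := by
      intro ξ hξ
      exact nns_sign_const (fun ξ => fderiv ℝ f ξ (1,0)) hfxcont hQc hfxne hz₀ hξ hpos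
    refine nns_reach lam hlam₀ hlam₁ K h0K h1K hK01 hKc hKattr f hf c 1
      (Or.inl rfl) hfy ?_ hpl hqh
    intro ξ hξ
    have h := hder ξ hξ
    have hy := hfy ξ hξ
    have hx := hfxpos ξ hξ
    rw [abs_of_pos hy, abs_of_pos hx] at h
    constructor <;> [linarith [h.1]; linarith [h.2]]

/-- Nonlinear thickness theorem for the homogeneous self-similar set `K_λ`, the attractor of
the IFS `{x ↦ λx, x ↦ λx + 1 - λ}` with `0 < λ < 1/2`: if `f : ℝ² → ℝ` is `C¹` and on `[0,1]²`
one has `∂_y f ≠ 0` and `(1-2λ)/λ · |∂_y f| ≤ |∂_x f| ≤ 1/(1-2λ) · |∂_y f|`, then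
`f(K_λ, K_λ)` is the closed interval from its minimum to its maximum. -/
theorem nonlinear_newhouse_selfsimilar (lam : ℝ) (hlam₀ : 0 < lam) (hlam₁ : lam < 1 / 2)
    (K : Set ℝ) (hKne : K.Nonempty) (hKc : IsCompact K)
    (hKattr : K = (fun x => lam * x) '' K ∪ (fun x => lam * x + 1 - lam) '' K)
    (f : ℝ × ℝ → ℝ) (hf : ContDiff ℝ 1 f)
    (hder : ∀ p ∈ Set.Icc (0 : ℝ) 1 ×ˢ Set.Icc (0 : ℝ) 1,
      fderiv ℝ f p (0, 1) ≠ 0 ∧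
      (1 - 2 * lam) / lam * |fderiv ℝ f p (0, 1)| ≤ |fderiv ℝ f p (1, 0)| ∧
      |fderiv ℝ f p (1, 0)| ≤ 1 / (1 - 2 * lam) * |fderiv ℝ f p (0, 1)|) :
    f '' K ×ˢ K = Set.Icc (sInf (f '' K ×ˢ K)) (sSup (f '' K ×ˢ K)) := by
  obtain ⟨h0K, h1K, hK01⟩ := nns_K_facts lam hlam₀ (by linarith) K hKne hKc hKattr
  have himgc : IsCompact (f '' (K ×ˢ K)) := (hKc.prod hKc).image hf.continuous
  have hne : (f '' (K ×ˢ K)).Nonempty := (hKne.prod hKne).image f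
  apply Subset.antisymm
  · intro x hx
    exact ⟨csInf_le himgc.bddBelow hx, le_csSup himgc.bddAbove hx⟩
  · intro c hc
    obtain ⟨p, hp, hfp⟩ := himgc.sInf_mem hne
    obtain ⟨q, hq, hfq⟩ := himgc.sSup_mem hne
    have hpl : ∃ p ∈ K ×ˢ K, f p ≤ c := ⟨p, hp, by rw [hfp]; exact hc.1⟩
    have hqh : ∃ q ∈ K ×ˢ K, c ≤ f q := ⟨q, hq, by rw [hfq]; exact hc.2⟩
    have hQc : Convex ℝ (Icc (0:ℝ) 1 ×ˢ Icc (0:ℝ) 1) := (convex_Icc _ _).prod (convex_Icc _ _)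
    have hfycont : Continuous (fun ξ => fderiv ℝ f ξ (0, 1)) :=
      (hf.continuous_fderiv one_ne_zero).clm_apply continuous_const
    have hz₀ : ((0:ℝ), (0:ℝ)) ∈ Icc (0:ℝ) 1 ×ˢ Icc (0:ℝ) 1 := by
      constructor <;> exact ⟨le_rfl, zero_le_one⟩
    have hfyne : ∀ ξ ∈ Icc (0:ℝ) 1 ×ˢ Icc (0:ℝ) 1, fderiv ℝ f ξ (0, 1) ≠ 0 :=
      fun ξ hξ => (hder ξ hξ).1
    rcases (hfyne _ hz₀).lt_or_gt with hneg | hpos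
    · -- apply to -f
      set g : ℝ × ℝ → ℝ := fun p => -f p with hgdef
      have hg : ContDiff ℝ 1 g := hf.neg
      have hgd : ∀ ξ : ℝ × ℝ, fderiv ℝ g ξ = -fderiv ℝ f ξ := fun ξ => fderiv_neg
      have hgy : ∀ ξ ∈ Icc (0:ℝ) 1 ×ˢ Icc (0:ℝ) 1, 0 < fderiv ℝ g ξ (0,1) := by
        intro ξ hξ
        rw [hgd, ContinuousLinearMap.neg_apply]
        exact nns_sign_const (fun ξ => -fderiv ℝ f ξ (0,1)) hfycont.neg hQc
          (fun x hx => neg_ne_zero.mpr (hfyne x hx)) hz₀ hξ (by linarith)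
      have hgder : ∀ ξ ∈ Icc (0:ℝ) 1 ×ˢ Icc (0:ℝ) 1,
          (1 - 2 * lam) / lam * |fderiv ℝ g ξ (0, 1)| ≤ |fderiv ℝ g ξ (1, 0)| ∧
          |fderiv ℝ g ξ (1, 0)| ≤ 1 / (1 - 2 * lam) * |fderiv ℝ g ξ (0, 1)| := by
        intro ξ hξ
        rw [hgd, ContinuousLinearMap.neg_apply, ContinuousLinearMap.neg_apply,
          abs_neg, abs_neg]
        exact (hder ξ hξ).2
      have hres := nns_main2 lam hlam₀ (by linarith) K h0K h1K hK01 hKc hKattr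
        g hg (-c) hgy hgder
        (by
          obtain ⟨q, hq, hfq⟩ := hqh
          exact ⟨q, hq, by simp only [hgdef]; linarith⟩)
        (by
          obtain ⟨p, hp, hfp⟩ := hpl
          exact ⟨p, hp, by simp only [hgdef]; linarith⟩)
      obtain ⟨z, hz, hgz⟩ := hres
      refine ⟨z, hz, ?_⟩
      simp only [hgdef] at hgz
      linarith
    · have hfypos : ∀ ξ ∈ Icc (0:ℝ) 1 ×ˢ Icc (0:ℝ) 1, 0 < fderiv ℝ f ξ (0,1) :=
        fun ξ hξ => nns_sign_const (fun ξ => fderiv ℝ f ξ (0,1)) hfycont hQc hfyne hz₀ hξ hpos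
      exact nns_main2 lam hlam₀ (by linarith) K h0K h1K hK01 hKc hKattr f hf c
        hfypos (fun ξ hξ => (hder ξ hξ).2) hpl hqh
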